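/- Define the additive-noise cost by cost_add(D, D̂) = inf{η ≥ 0 : D̂ = (1−η)D + ηE for some distribution E}. Then cost_add is closed under mixtures: for any distributions D_1, D_2, D̂_1, D̂_2 and θ ∈ (0,1), cost_add(θD_1 + (1−θ)D_2, θD̂_1 + (1−θ)D̂_2) ≤ max(cost_add(D_1, D̂_1), cost_add(D_2, D̂_2)). -/

import Mathlib

open Finset

def IsPMF {X : Type*} [Fintype X] (D : X → ℝ) : Prop :=
  (∀ x, 0 ≤ D x) ∧ ∑ x, D x = 1

/-- The additive-noise cost: the least `η ∈ [0,1]` such that `D̂ = (1−η)D + ηE` for some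
distribution `E` (and `∞` if no such `η` exists). -/
noncomputable def costAdd {X : Type*} [Fintype X] (D Dh : X → ℝ) : ENNReal :=
  sInf {η : ENNReal | ∃ e : ℝ, η = ENNReal.ofReal e ∧ 0 ≤ e ∧ e ≤ 1 ∧
    ∃ E : X → ℝ, IsPMF E ∧ ∀ x, Dh x = (1 - e) * D x + e * E x}

/-- The additive-noise cost function is closed under mixtures. -/
theorem stmt7 {X : Type*} [Fintype X]
    (D₁ D₂ Dh₁ Dh₂ : X → ℝ)
    (hD₁ : IsPMF D₁) (hD₂ : IsPMF D₂) (hDh₁ : IsPMF Dh₁) (hDh₂ : IsPMF Dh₂)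
    (θ : ℝ) (hθ : θ ∈ Set.Ioo (0:ℝ) 1) :
    costAdd (fun x => θ * D₁ x + (1 - θ) * D₂ x) (fun x => θ * Dh₁ x + (1 - θ) * Dh₂ x)
      ≤ max (costAdd D₁ Dh₁) (costAdd D₂ Dh₂) := by
  obtain ⟨hθ0, hθ1⟩ := hθ
  have hθ1' : (0:ℝ) ≤ 1 - θ := by linarith
  -- reduce to membership of max a b for a, b in the respective sets
  unfold costAdd
  rw [sInf_sup_eq]
  refine le_iInf₂ fun a ha => ?_
  rw [sup_sInf_eq]
  refine le_iInf₂ fun b hb => ?_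
  obtain ⟨e₁, rfl, he₁0, he₁1, E₁, hE₁, heq₁⟩ := ha
  obtain ⟨e₂, rfl, he₂0, he₂1, E₂, hE₂, heq₂⟩ := hb
  set e := max e₁ e₂ with he
  have he0 : 0 ≤ e := le_trans he₁0 (le_max_left _ _)
  have he1 : e ≤ 1 := max_le he₁1 he₂1
  have hsup : ENNReal.ofReal e₁ ⊔ ENNReal.ofReal e₂ = ENNReal.ofReal e := by
    rcases le_total e₁ e₂ with h | h
    · rw [he, max_eq_right h, sup_eq_right.2 (ENNReal.ofReal_le_ofReal h)]
    · rw [he, max_eq_left h, sup_eq_left.2 (ENNReal.ofReal_le_ofReal h)]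
  rw [hsup]
  apply sInf_le
  refine ⟨e, rfl, he0, he1, ?_⟩
  rcases eq_or_lt_of_le he0 with heq0 | hepos
  · -- e = 0; then e₁ = e₂ = 0
    have h1 : e₁ = 0 := le_antisymm (by rw [heq0]; exact le_sup_left) he₁0
    have h2 : e₂ = 0 := le_antisymm (by rw [heq0]; exact le_sup_right) he₂0
    refine ⟨fun x => θ * D₁ x + (1 - θ) * D₂ x, ?_, fun x => ?_⟩
    · constructor
      · intro x
        have := hD₁.1 x; have := hD₂.1 x; positivity
      · rw [Finset.sum_add_distrib, ← Finset.mul_sum, ← Finset.mul_sum, hD₁.2, hD₂.2]; ring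
    · have h₁ := heq₁ x; have h₂ := heq₂ x
      rw [h1] at h₁; rw [h2] at h₂
      simp only [h₁, h₂, ← heq0]; ring
  · -- e > 0
    refine ⟨fun x => (θ * (e - e₁) * D₁ x + θ * e₁ * E₁ x
        + (1 - θ) * (e - e₂) * D₂ x + (1 - θ) * e₂ * E₂ x) / e, ?_, fun x => ?_⟩
    · constructor
      · intro x
        have h1 := hD₁.1 x; have h2 := hD₂.1 x; have h3 := hE₁.1 x; have h4 := hE₂.1 x
        have hee₁ : 0 ≤ e - e₁ := by simp [he]
        have hee₂ : 0 ≤ e - e₂ := by simp [he]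
        positivity
      · rw [← Finset.sum_div]
        rw [div_eq_one_iff_eq (ne_of_gt hepos)]
        simp only [Finset.sum_add_distrib, ← Finset.mul_sum]
        rw [hD₁.2, hD₂.2, hE₁.2, hE₂.2]; ring
    · simp only [heq₁ x, heq₂ x]
      field_simp
      ring
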